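/- For c ∈ {0,1}, the shuffle regularization commutes with ∂_{z,c}: ∂_{z,c}(reg_⧢(w)) = reg_⧢(∂_{z,c}(w)) for all w ∈ A_z^1. -/

import Mathlib

open scoped BigOperators

/-- Letters: `0 ↦ e₀`, `1 ↦ e₁`, `2 ↦ e_z`. -/
abbrev Letter := Fin 3

/-- The free noncommutative ring `𝒜_z = ℤ⟨e₀, e₁, e_z⟩`. -/
abbrev Az := MonoidAlgebra ℤ (FreeMonoid Letter)

/-- The monomial (word) corresponding to a list of letters. -/
noncomputable def wordOf (l : List Letter) : Az :=
  MonoidAlgebra.single (FreeMonoid.ofList l) 1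

/-- The extended sequence `a₀ = 0, a₁, …, a_n, a_{n+1} = 1`. -/
def ext (a : List Letter) (j : ℕ) : Letter :=
  ((0 : Letter) :: a ++ [1]).getD j 1

/-- `∂_{α,β}` on a word. -/
noncomputable def Dword (α β : Letter) (a : List Letter) : Az :=
  ∑ i ∈ Finset.range a.length,
    (((if ({ext a (i + 1), ext a (i + 2)} : Finset Letter) = {α, β} then 1 else 0)
      - (if ({ext a i, ext a (i + 1)} : Finset Letter) = {α, β} then 1 else 0) : ℤ))
      • wordOf (a.eraseIdx i)

/-- The linear operator `∂_{α,β} : 𝒜_z → 𝒜_z`. -/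
noncomputable def del (α β : Letter) : Az →ₗ[ℤ] Az :=
  (Finsupp.lsum ℤ fun w => LinearMap.toSpanSingleton ℤ Az (Dword α β (FreeMonoid.toList w))) ∘ₗ (MonoidAlgebra.coeffLinearEquiv ℤ).toLinearMap

/-- The shuffle product of two words. -/
noncomputable def shuffleWord : List Letter → List Letter → Az
  | [], v => wordOf v
  | u, [] => wordOf u
  | a :: u, b :: v =>
      wordOf [a] * shuffleWord u (b :: v) + wordOf [b] * shuffleWord (a :: u) v
termination_by u v => u.length + v.length

/-- The shuffle product as a bilinear map on `𝒜_z`. -/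
noncomputable def sh : Az →ₗ[ℤ] Az →ₗ[ℤ] Az :=
  (Finsupp.lsum ℤ fun u => LinearMap.toSpanSingleton ℤ (Az →ₗ[ℤ] Az)
    ((Finsupp.lsum ℤ fun v =>
      LinearMap.toSpanSingleton ℤ Az (shuffleWord (FreeMonoid.toList u) (FreeMonoid.toList v))) ∘ₗ (MonoidAlgebra.coeffLinearEquiv ℤ).toLinearMap)) ∘ₗ (MonoidAlgebra.coeffLinearEquiv ℤ).toLinearMap

/-- The (generalized) stuffle product of two words (the left word should lie in `𝒜`). -/
noncomputable def stWord : List Letter → List Letter → Az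
  | [], v => wordOf v
  | u, [] => wordOf u
  | a :: u, b :: v =>
      if a = 0 then wordOf [0] * stWord u (b :: v)
      else if a = 1 then
        wordOf [b] * (stWord u (b :: v) + stWord (a :: u) v - wordOf [0] * stWord u v)
      else 0
termination_by u v => u.length + v.length

/-- The stuffle product as a bilinear map. -/
noncomputable def st : Az →ₗ[ℤ] Az →ₗ[ℤ] Az :=
  (Finsupp.lsum ℤ fun u => LinearMap.toSpanSingleton ℤ (Az →ₗ[ℤ] Az)
    ((Finsupp.lsum ℤ fun v =>
      LinearMap.toSpanSingleton ℤ Az (stWord (FreeMonoid.toList u) (FreeMonoid.toList v))) ∘ₗ (MonoidAlgebra.coeffLinearEquiv ℤ).toLinearMap)) ∘ₗ (MonoidAlgebra.coeffLinearEquiv ℤ).toLinearMap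

/-- `Const` kills every word containing the letter `e_z`. -/
noncomputable def Const : Az →ₗ[ℤ] Az :=
  (Finsupp.lsum ℤ fun w => LinearMap.toSpanSingleton ℤ Az
    (if (2 : Letter) ∈ FreeMonoid.toList w then 0 else wordOf (FreeMonoid.toList w))) ∘ₗ (MonoidAlgebra.coeffLinearEquiv ℤ).toLinearMap

/-- `τ_z` on letters. -/
noncomputable def tauLetter (a : Letter) : Az :=
  if a = 0 then wordOf [2] - wordOf [1]
  else if a = 1 then wordOf [2] - wordOf [0]
  else wordOf [2]

/-- `τ_z` on a word (reversing the word). -/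
noncomputable def tauWord : List Letter → Az
  | [] => 1
  | a :: u => tauWord u * tauLetter a

/-- The duality anti-automorphism `τ_z`. -/
noncomputable def tau : Az →ₗ[ℤ] Az :=
  (Finsupp.lsum ℤ fun w => LinearMap.toSpanSingleton ℤ Az (tauWord (FreeMonoid.toList w))) ∘ₗ (MonoidAlgebra.coeffLinearEquiv ℤ).toLinearMap

/-- `𝒜_z^0`: span of the empty word and of words beginning with `e₁` or `e_z`
and ending in `e₀` or `e_z`. -/
noncomputable def Az0 : Submodule ℤ Az :=
  Submodule.span ℤ {x | ∃ l : List Letter,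
    (l = [] ∨ (l.head? ≠ some 0 ∧ l.getLast? ≠ some 1)) ∧ x = wordOf l}

/-- `𝒜_z^1`: span of the empty word and of words beginning with `e₁` or `e_z`. -/
noncomputable def Az1 : Submodule ℤ Az :=
  Submodule.span ℤ {x | ∃ l : List Letter, l.head? ≠ some 0 ∧ x = wordOf l}

/-- `𝒜 = ℤ⟨e₀, e₁⟩` inside `𝒜_z`. -/
noncomputable def Asub : Submodule ℤ Az :=
  Submodule.span ℤ {x | ∃ l : List Letter, (2 : Letter) ∉ l ∧ x = wordOf l}

/-- `𝒜^1 = ℤ ⊕ e₁𝒜`. -/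
noncomputable def A1sub : Submodule ℤ Az :=
  Submodule.span ℤ {x | ∃ l : List Letter,
    ((2 : Letter) ∉ l ∧ l.head? ≠ some 0 ∧ l.head? ≠ some 2) ∧ x = wordOf l}

/-- `𝒜^0 = ℤ ⊕ e₁𝒜e₀`. -/
noncomputable def A0sub : Submodule ℤ Az :=
  Submodule.span ℤ {x | ∃ l : List Letter,
    ((2 : Letter) ∉ l ∧ (l = [] ∨ (l.head? = some 1 ∧ l.getLast? = some 0))) ∧ x = wordOf l}

/-- `𝒜_z^{-2} = ℤ ⊕ e₁𝒜_z e₀ ⊕ e_z 𝒜_z e₀`. -/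
noncomputable def Azm2 : Submodule ℤ Az :=
  Submodule.span ℤ {x | ∃ l : List Letter,
    (l = [] ∨ (l.head? ≠ some 0 ∧ l.getLast? = some 0)) ∧ x = wordOf l}

/-- `𝒜_z^0 ∩ ℤ⟨e₁, e_z⟩`. -/
noncomputable def Wsub : Submodule ℤ Az :=
  Submodule.span ℤ {x | ∃ l : List Letter,
    ((0 : Letter) ∉ l ∧ (l = [] ∨ l.getLast? = some 2)) ∧ x = wordOf l}

/-- `ℤ⟨e_z⟩`: span of powers of `e_z`. -/
noncomputable def Zez : Submodule ℤ Az :=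
  Submodule.span ℤ {x | ∃ k : ℕ, x = wordOf (List.replicate k 2)}

/-- `𝒜_z^{-1} = 𝒜_z^{-2}·ℤ⟨e_z⟩`. -/
noncomputable def Azm1 : Submodule ℤ Az :=
  Submodule.span ℤ {x | ∃ l : List Letter, ∃ k : ℕ,
    (l = [] ∨ (l.head? ≠ some 0 ∧ l.getLast? = some 0)) ∧ x = wordOf (l ++ List.replicate k 2)}

/-- `ℤ⟨e₀, e_z⟩ ∩ 𝒜_z^0`. -/
noncomputable def Vsub : Submodule ℤ Az :=
  Submodule.span ℤ {x | ∃ l : List Letter,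
    ((1 : Letter) ∉ l ∧ (l = [] ∨ l.head? = some 2)) ∧ x = wordOf l}

/-- All lists of length `r` with entries in `{e₀, e_z}`. -/
def tuples : ℕ → List (List Letter)
  | 0 => [[]]
  | n + 1 => (tuples n).flatMap fun t => [(0 : Letter) :: t, (2 : Letter) :: t]

/-- `∂_{1,b₁} ∘ ⋯ ∘ ∂_{1,b_r}` for `bs = [b₁, …, b_r]`. -/
noncomputable def delChain : List Letter → Az →ₗ[ℤ] Az
  | [] => LinearMap.id
  | b :: bs => (del 1 b).comp (delChain bs)

/-- `∂_{z,α₁} ∘ ⋯ ∘ ∂_{z,α_r}` for `as = [α₁, …, α_r]`. -/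
noncomputable def delZChain : List Letter → Az →ₗ[ℤ] Az
  | [] => LinearMap.id
  | a :: as => (del 2 a).comp (delZChain as)

/-- `φ_⧢` on a word. -/
noncomputable def phiShWord (l : List Letter) : Az :=
  ∑ r ∈ Finset.range (l.length + 1),
    ((tuples r).map fun b => sh (Const (delChain b (wordOf l))) (wordOf b)).sum

/-- `φ_⧢ : 𝒜_z^0 → 𝒜_z^0` (defined on all of `𝒜_z`). -/
noncomputable def phiSh : Az →ₗ[ℤ] Az :=
  (Finsupp.lsum ℤ fun w => LinearMap.toSpanSingleton ℤ Az (phiShWord (FreeMonoid.toList w))) ∘ₗ (MonoidAlgebra.coeffLinearEquiv ℤ).toLinearMap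

/-- `φ_*` on a word. -/
noncomputable def phiStWord (l : List Letter) : Az :=
  ∑ r ∈ Finset.range (l.length + 1),
    ((tuples r).map fun b => st (Const (delChain b (wordOf l))) (wordOf b)).sum

/-- `φ_* : 𝒜_z^0 → 𝒜_z^0` (defined on all of `𝒜_z`). -/
noncomputable def phiSt : Az →ₗ[ℤ] Az :=
  (Finsupp.lsum ℤ fun w => LinearMap.toSpanSingleton ℤ Az (phiStWord (FreeMonoid.toList w))) ∘ₗ (MonoidAlgebra.coeffLinearEquiv ℤ).toLinearMap

/-- `φ_⊗` on a word. -/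
noncomputable def phiTWord (l : List Letter) : TensorProduct ℤ Az Az :=
  ∑ r ∈ Finset.range (l.length + 1),
    ((tuples r).map fun b => (Const (delChain b (wordOf l))) ⊗ₜ[ℤ] (wordOf b)).sum

/-- `φ_⊗ : 𝒜_z^0 → 𝒜^0 ⊗ ℤ⟨e₀, e_z⟩` (defined on all of `𝒜_z`). -/
noncomputable def phiT : Az →ₗ[ℤ] TensorProduct ℤ Az Az :=
  (Finsupp.lsum ℤ fun w => LinearMap.toSpanSingleton ℤ (TensorProduct ℤ Az Az)
    (phiTWord (FreeMonoid.toList w))) ∘ₗ (MonoidAlgebra.coeffLinearEquiv ℤ).toLinearMap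

/-- The `i`-fold shuffle power of `e₁`. -/
noncomputable def e1pow : ℕ → Az
  | 0 => 1
  | n + 1 => sh (wordOf [1]) (e1pow n)

/-- Substitution `z → 1` on words. -/
noncomputable def subst1 : Az →ₗ[ℤ] Az :=
  (Finsupp.lsum ℤ fun w => LinearMap.toSpanSingleton ℤ Az
    (wordOf ((FreeMonoid.toList w).map fun a => if a = 2 then 1 else a))) ∘ₗ (MonoidAlgebra.coeffLinearEquiv ℤ).toLinearMap

section Stmt17Aux

open Finset

lemma wordOf_nil : wordOf [] = 1 := rfl

lemma lsum_coeff_single (F : FreeMonoid Letter → Az)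
    (m : FreeMonoid Letter) :
    ((Finsupp.lsum ℤ fun w => LinearMap.toSpanSingleton ℤ Az (F w)) ∘ₗ
      (MonoidAlgebra.coeffLinearEquiv ℤ).toLinearMap) (MonoidAlgebra.single m 1) = F m := by
  rw [LinearMap.comp_apply]
  change (Finsupp.lsum ℤ fun w => LinearMap.toSpanSingleton ℤ Az (F w)) (Finsupp.single m 1) = F m
  rw [Finsupp.lsum_single, LinearMap.toSpanSingleton_apply, one_smul]

lemma lsum_coeff_single' (F : FreeMonoid Letter → (Az →ₗ[ℤ] Az))
    (m : FreeMonoid Letter) :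
    ((Finsupp.lsum ℤ fun w => LinearMap.toSpanSingleton ℤ (Az →ₗ[ℤ] Az) (F w)) ∘ₗ
      (MonoidAlgebra.coeffLinearEquiv ℤ).toLinearMap) (MonoidAlgebra.single m 1) = F m := by
  rw [LinearMap.comp_apply]
  change (Finsupp.lsum ℤ fun w => LinearMap.toSpanSingleton ℤ (Az →ₗ[ℤ] Az) (F w)) (Finsupp.single m 1) = F m
  rw [Finsupp.lsum_single, LinearMap.toSpanSingleton_apply, one_smul]

lemma sh_word (u v : List Letter) : sh (wordOf u) (wordOf v) = shuffleWord u v := by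
  rw [sh, wordOf, wordOf]
  rw [lsum_coeff_single', lsum_coeff_single]
  rw [FreeMonoid.toList_ofList, FreeMonoid.toList_ofList]

lemma del_word (α β : Letter) (l : List Letter) : del α β (wordOf l) = Dword α β l := by
  rw [del, wordOf]
  rw [lsum_coeff_single]
  rw [FreeMonoid.toList_ofList]

lemma single_eq_smul_wordOf (m : FreeMonoid Letter) (c : ℤ) :
    MonoidAlgebra.single m c = c • wordOf (FreeMonoid.toList m) := by
  rw [wordOf, FreeMonoid.ofList_toList]
  rw [MonoidAlgebra.smul_single]
  rw [smul_eq_mul, mul_one]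

lemma wordOf_cons (a : Letter) (l : List Letter) :
    wordOf (a :: l) = wordOf [a] * wordOf l := by
  rw [wordOf, wordOf, wordOf, MonoidAlgebra.single_mul_single, one_mul]
  rfl

noncomputable def la (a : Letter) : Az →ₗ[ℤ] Az := LinearMap.mulLeft ℤ (wordOf [a])

lemma la_word (a : Letter) (l : List Letter) : la a (wordOf l) = wordOf (a :: l) :=
  (wordOf_cons a l).symm

lemma shuffleWord_nil_left (v : List Letter) : shuffleWord [] v = wordOf v := by
  rw [shuffleWord]

lemma shuffleWord_nil_right (u : List Letter) : shuffleWord u [] = wordOf u := by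
  cases u with
  | nil => rw [shuffleWord]
  | cons a u => rw [shuffleWord]; simp

lemma shuffleWord_cons (a b : Letter) (u v : List Letter) :
    shuffleWord (a :: u) (b :: v) =
      la a (shuffleWord u (b :: v)) + la b (shuffleWord (a :: u) v) := by
  rw [shuffleWord]; rfl

/-- Generic extension principle: to prove a linear identity on `Az`, check it on words. -/
lemma az_induction {P : Az → Prop} (h0 : P 0) (hadd : ∀ x y, P x → P y → P (x + y))
    (hsmul : ∀ (c : ℤ) x, P x → P (c • x))
    (hword : ∀ l : List Letter, P (wordOf l)) (x : Az) : P x := by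
  induction x using MonoidAlgebra.induction_linear with
  | zero => exact h0
  | add a b ha hb => exact hadd _ _ ha hb
  | single m c =>
      rw [single_eq_smul_wordOf]
      exact hsmul _ _ (hword _)

lemma sh_one_right (x : Az) : sh x (wordOf []) = x := by
  induction x using az_induction with
  | h0 => simp
  | hadd x y hx hy => simp [hx, hy]
  | hsmul c x hx => simp only [map_smul, LinearMap.smul_apply, hx]
  | hword l => rw [sh_word, shuffleWord_nil_right]

lemma sh_one_left (x : Az) : sh (wordOf []) x = x := by
  induction x using az_induction with
  | h0 => simp
  | hadd x y hx hy => simp [hx, hy]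
  | hsmul c x hx => simp only [map_smul, hx]
  | hword l => rw [sh_word, shuffleWord_nil_left]

lemma sh_one_right' (x : Az) : sh x (1 : Az) = x := sh_one_right x

lemma sh_one_left' (x : Az) : sh (1 : Az) x = x := sh_one_left x

lemma K1 (a b : Letter) (v : List Letter) (x : Az) :
    sh (la a x) (wordOf (b :: v)) =
      la a (sh x (wordOf (b :: v))) + la b (sh (la a x) (wordOf v)) := by
  induction x using az_induction with
  | h0 => simp
  | hadd x y hx hy => simp only [map_add, LinearMap.add_apply, hx, hy]; abel
  | hsmul c x hx => simp only [map_smul, LinearMap.smul_apply, hx, smul_add]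
  | hword l =>
      rw [la_word, sh_word, sh_word, sh_word, shuffleWord_cons]

lemma K1' (a b : Letter) (u : List Letter) (y : Az) :
    sh (wordOf (a :: u)) (la b y) =
      la b (sh (wordOf (a :: u)) y) + la a (sh (wordOf u) (la b y)) := by
  induction y using az_induction with
  | h0 => simp
  | hadd x y hx hy => simp only [map_add, LinearMap.add_apply, hx, hy]; abel
  | hsmul c x hx => simp only [map_smul, LinearMap.smul_apply, hx, smul_add]
  | hword l =>
      rw [la_word, sh_word, sh_word, sh_word, shuffleWord_cons]
      abel

end Stmt17Aux
section Stmt17Assoc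

lemma sh_assoc_word : ∀ n (u v w : List Letter), u.length + v.length + w.length ≤ n →
    sh (sh (wordOf u) (wordOf v)) (wordOf w) = sh (wordOf u) (sh (wordOf v) (wordOf w)) := by
  intro n
  induction n with
  | zero =>
      intro u v w h
      have hu : u = [] := by cases u <;> simp_all
      subst hu
      rw [sh_one_left, sh_one_left]
  | succ n ih =>
      intro u v w h
      match u, v, w with
      | [], v, w => rw [sh_one_left, sh_one_left]
      | a :: u', [], w => rw [sh_one_right, sh_one_left]
      | a :: u', b :: v', [] => rw [sh_one_right, sh_one_right]
      | a :: u', b :: v', c :: w' =>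
        simp only [List.length_cons] at h
        have e1 := K1 a b v' (wordOf u')
        rw [la_word] at e1
        have e2 := K1 b c w' (wordOf v')
        rw [la_word] at e2
        have i1 := ih u' (b :: v') (c :: w') (by simp only [List.length_cons]; omega)
        have i2 := ih (a :: u') v' (c :: w') (by simp only [List.length_cons]; omega)
        have i3 := ih (a :: u') (b :: v') w' (by simp only [List.length_cons]; omega)
        have L : sh (sh (wordOf (a :: u')) (wordOf (b :: v'))) (wordOf (c :: w')) =
            la a (sh (wordOf u') (sh (wordOf (b :: v')) (wordOf (c :: w')))) +
            la b (sh (wordOf (a :: u')) (sh (wordOf v') (wordOf (c :: w')))) +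
            la c (sh (wordOf (a :: u')) (sh (wordOf (b :: v')) (wordOf w'))) := by
          have hc3 : la c (sh (la a (sh (wordOf u') (wordOf (b :: v')))) (wordOf w')) +
              la c (sh (la b (sh (wordOf (a :: u')) (wordOf v'))) (wordOf w')) =
              la c (sh (wordOf (a :: u')) (sh (wordOf (b :: v')) (wordOf w'))) := by
            rw [← map_add, ← LinearMap.add_apply, ← map_add, ← e1, i3]
          rw [e1, map_add, LinearMap.add_apply, K1, K1, i1, i2, ← hc3]
          abel
        have R : sh (wordOf (a :: u')) (sh (wordOf (b :: v')) (wordOf (c :: w'))) =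
            la a (sh (wordOf u') (sh (wordOf (b :: v')) (wordOf (c :: w')))) +
            la b (sh (wordOf (a :: u')) (sh (wordOf v') (wordOf (c :: w')))) +
            la c (sh (wordOf (a :: u')) (sh (wordOf (b :: v')) (wordOf w'))) := by
          rw [e2, map_add, K1', K1']
          simp only [map_add]
          abel
        rw [L, R]

lemma sh_assoc (x y z : Az) : sh (sh x y) z = sh x (sh y z) := by
  induction x using az_induction with
  | h0 => simp
  | hadd x x' hx hx' => simp only [map_add, LinearMap.add_apply, hx, hx']
  | hsmul c x hx => simp only [map_smul, LinearMap.smul_apply, hx]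
  | hword lu =>
    induction y using az_induction with
    | h0 => simp
    | hadd y y' hy hy' => simp only [map_add, LinearMap.add_apply, hy, hy']
    | hsmul c y hy => simp only [map_smul, LinearMap.smul_apply, hy]
    | hword lv =>
      induction z using az_induction with
      | h0 => simp
      | hadd z z' hz hz' => simp only [map_add, hz, hz']
      | hsmul c z hz => simp only [map_smul, hz]
      | hword lw =>
        exact sh_assoc_word (lu.length + lv.length + lw.length) lu lv lw le_rfl

end Stmt17Assoc
section Stmt17DOne

/-- Right deconcatenation of a trailing `e₁` on a word. -/
noncomputable def dWord (l : List Letter) : Az :=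
  if l.getLast? = some 1 then wordOf l.dropLast else 0

/-- Right deconcatenation of a trailing `e₁`, as a linear map. -/
noncomputable def dOne : Az →ₗ[ℤ] Az :=
  (Finsupp.lsum ℤ fun w => LinearMap.toSpanSingleton ℤ Az (dWord (FreeMonoid.toList w))) ∘ₗ (MonoidAlgebra.coeffLinearEquiv ℤ).toLinearMap

lemma dOne_word (l : List Letter) : dOne (wordOf l) = dWord l := by
  rw [dOne, wordOf]
  rw [lsum_coeff_single]
  rw [FreeMonoid.toList_ofList]

/-- Coefficient of the empty word. -/
noncomputable def eps0 : Az →ₗ[ℤ] ℤ := Finsupp.lapply 1 ∘ₗ (MonoidAlgebra.coeffLinearEquiv ℤ).toLinearMap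

lemma eps0_word (l : List Letter) : eps0 (wordOf l) = if l = [] then 1 else 0 := by
  classical
  rw [eps0, wordOf, LinearMap.comp_apply]
  change (Finsupp.single (FreeMonoid.ofList l) (1 : ℤ)) 1 = _
  rw [Finsupp.single_apply]
  have hiff : (FreeMonoid.ofList l = 1) ↔ (l = []) := by
    constructor
    · intro hh
      have : FreeMonoid.toList (FreeMonoid.ofList l) = FreeMonoid.toList 1 := by rw [hh]
      simpa [FreeMonoid.toList_ofList] using this
    · rintro rfl; rfl
  by_cases hl : l = []
  · rw [if_pos (hiff.mpr hl), if_pos hl]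
  · rw [if_neg (fun hh => hl (hiff.mp hh)), if_neg hl]

lemma dWord_nil : dWord [] = 0 := by
  simp [dWord]

lemma dWord_single (a : Letter) : dWord [a] = if a = 1 then 1 else 0 := by
  simp only [dWord, List.getLast?_singleton, Option.some.injEq, List.dropLast_singleton]
  split_ifs <;> simp [wordOf_nil]

lemma dWord_cons (a b : Letter) (m : List Letter) :
    dWord (a :: b :: m) = la a (dWord (b :: m)) := by
  simp only [dWord, List.getLast?_cons_cons]
  split_ifs with hlast
  · rw [List.dropLast_cons₂, ← la_word]
  · rw [map_zero]

lemma eps0_la (a : Letter) (x : Az) : eps0 (la a x) = 0 := by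
  induction x using az_induction with
  | h0 => simp
  | hadd x y hx hy => simp [hx, hy]
  | hsmul c x hx => simp only [map_smul, hx, smul_zero]
  | hword l => rw [la_word, eps0_word, if_neg (by simp)]

lemma eps0_sh_ne (u v : List Letter) (h : u ≠ [] ∨ v ≠ []) :
    eps0 (sh (wordOf u) (wordOf v)) = 0 := by
  match u, v with
  | [], [] => simp at h
  | [], b :: v' => rw [sh_one_left, ← la_word, eps0_la]
  | a :: u', [] => rw [sh_one_right, ← la_word, eps0_la]
  | a :: u', b :: v' =>
      rw [sh_word, shuffleWord_cons, map_add, eps0_la, eps0_la, add_zero]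

lemma K8 (a : Letter) (x : Az) :
    dOne (la a x) = la a (dOne x) + (if a = 1 then eps0 x else 0) • (1 : Az) := by
  induction x using az_induction with
  | h0 => simp
  | hadd x y hx hy =>
      simp only [map_add, hx, hy, smul_add]
      split_ifs <;> simp only [smul_add, add_smul, zero_smul, add_zero] <;> abel
  | hsmul c x hx =>
      simp only [map_smul, hx, smul_add]
      split_ifs <;> simp [smul_smul, mul_comm]
  | hword l =>
      cases l with
      | nil =>
          rw [la_word, eps0_word, dOne_word, dOne_word, dWord_nil, dWord_single]
          simp only [map_zero, zero_add, if_pos rfl]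
          split_ifs <;> simp
      | cons b m =>
          rw [la_word, eps0_word, dOne_word, dOne_word, dWord_cons,
            if_neg (show ¬(b :: m = []) by simp)]
          simp only [ite_self, zero_smul, add_zero]

lemma dOne_word_cons (a : Letter) (l : List Letter) :
    dOne (wordOf (a :: l)) = la a (dOne (wordOf l)) + (if a = 1 then eps0 (wordOf l) else 0) • (1 : Az) := by
  rw [← la_word, K8]

lemma dOne_sh_word : ∀ n (u v : List Letter), u.length + v.length ≤ n →
    dOne (sh (wordOf u) (wordOf v)) =
      sh (dOne (wordOf u)) (wordOf v) + sh (wordOf u) (dOne (wordOf v)) := by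
  intro n
  induction n with
  | zero =>
      intro u v h
      have hu : u = [] := by cases u <;> simp_all
      have hv : v = [] := by cases v <;> simp_all
      subst hu; subst hv
      rw [sh_one_left, sh_one_right, dOne_word, dWord_nil]
      simp
  | succ n ih =>
      intro u v h
      match u, v with
      | [], v =>
          rw [sh_one_left, dOne_word [], dWord_nil]
          simp [sh_one_left]
      | a :: u', [] =>
          rw [sh_one_right, dOne_word [], dWord_nil]
          simp [sh_one_right]
      | a :: u', b :: v' =>
          simp only [List.length_cons] at h
          have e1 := K1 a b v' (wordOf u')
          rw [la_word] at e1
          have i1 := ih u' (b :: v') (by simp only [List.length_cons]; omega)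
          have i2 := ih (a :: u') v' (by simp only [List.length_cons]; omega)
          rw [e1, map_add, K8 a, K8 b,
            eps0_sh_ne u' (b :: v') (Or.inr (by simp)),
            eps0_sh_ne (a :: u') v' (Or.inl (by simp))]
          rw [ite_self, ite_self, zero_smul, add_zero, add_zero]
          rw [i1, i2, dOne_word_cons a u', dOne_word_cons b v']
          simp only [map_add, LinearMap.add_apply]
          simp only [map_smul, LinearMap.smul_apply, sh_one_left', sh_one_right']
          rw [K1 a b v' (dOne (wordOf u')), K1' a b u' (dOne (wordOf v'))]
          simp only [map_add, map_smul, la_word]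
          abel

lemma dOne_sh (x y : Az) : dOne (sh x y) = sh (dOne x) y + sh x (dOne y) := by
  induction x using az_induction with
  | h0 => simp
  | hadd x x' hx hx' => simp only [map_add, LinearMap.add_apply, hx, hx']; abel
  | hsmul c x hx => simp only [map_smul, LinearMap.smul_apply, hx, smul_add]
  | hword lu =>
      induction y using az_induction with
      | h0 => simp
      | hadd y y' hy hy' => simp only [map_add, hy, hy']; abel
      | hsmul c y hy => simp only [map_smul, hy, smul_add]
      | hword lv => exact dOne_sh_word (lu.length + lv.length) lu lv le_rfl

end Stmt17DOne
section Stmt17RK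

open Finset

lemma shuffleWord_replicate : ∀ (m k : ℕ),
    shuffleWord (List.replicate m 1) (List.replicate k 1)
      = ((m + k).choose k) • wordOf (List.replicate (m + k) 1) := by
  intro m
  induction m with
  | zero =>
      intro k
      rw [List.replicate_zero, shuffleWord_nil_left, zero_add, Nat.choose_self, one_smul]
  | succ m ihm =>
      intro k
      induction k with
      | zero =>
          rw [List.replicate_zero, shuffleWord_nil_right, Nat.add_zero, Nat.choose_zero_right,
            one_smul]
      | succ k ihk =>
          rw [List.replicate_succ (a := (1 : Letter)) (n := m), List.replicate_succ (a := (1 : Letter)) (n := k),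
            shuffleWord_cons, ← List.replicate_succ (a := (1 : Letter)) (n := m),
            ← List.replicate_succ (a := (1 : Letter)) (n := k), ihm (k + 1), ihk, map_nsmul, map_nsmul,
            la_word, la_word, ← List.replicate_succ (a := (1 : Letter)) (n := (m + (k+1))),
            ← List.replicate_succ (a := (1 : Letter)) (n := (m + 1 + k))]
          have h1 : m + 1 + k = m + k + 1 := by omega
          have h2 : m + (k + 1) = m + k + 1 := by omega
          rw [h1, h2, ← add_smul,
            show m + 1 + (k + 1) = (m + k + 1) + 1 from by omega,
            Nat.choose_succ_succ' (m + k + 1) k,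
            add_comm ((m + k + 1).choose (k + 1)) ((m + k + 1).choose k)]

lemma e1pow_eq (n : ℕ) : e1pow n = n.factorial • wordOf (List.replicate n 1) := by
  induction n with
  | zero => simp [e1pow, wordOf_nil]
  | succ n ih =>
      rw [show e1pow (n + 1) = sh (wordOf [1]) (e1pow n) from rfl, ih, map_nsmul]
      rw [show wordOf [1] = wordOf (List.replicate 1 1) from rfl, sh_word,
        shuffleWord_replicate 1 n]
      have h1 : (1 + n).choose n = n + 1 := by
        rw [show (1 : ℕ) + n = n + 1 from by omega, Nat.choose_succ_self_right]
      rw [h1, smul_smul, show (1 : ℕ) + n = n + 1 from by omega]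
      congr 1
      rw [Nat.factorial_succ, mul_comm]

lemma dOne_wordOf_one : dOne (wordOf [1]) = 1 := by
  rw [dOne_word, dWord_single, if_pos rfl]

lemma dOne_e1pow_zero : dOne (e1pow 0) = 0 := by
  rw [e1pow, ← wordOf_nil, dOne_word, dWord_nil]

lemma dOne_e1pow (n : ℕ) : dOne (e1pow (n + 1)) = (n + 1) • e1pow n := by
  induction n with
  | zero =>
      rw [show e1pow 1 = sh (wordOf [1]) (e1pow 0) from rfl,
        show e1pow 0 = (1 : Az) from rfl, sh_one_right', dOne_wordOf_one, zero_add, one_smul]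
  | succ n ih =>
      rw [show e1pow (n + 2) = sh (wordOf [1]) (e1pow (n + 1)) from rfl, dOne_sh,
        dOne_wordOf_one, ih, sh_one_left', map_nsmul]
      rw [show e1pow (n + 1) = sh (wordOf [1]) (e1pow n) from rfl]
      rw [succ_nsmul ((sh (wordOf [1])) (e1pow n)) (n + 1)]
      abel

lemma dOne_iter_zero (j : ℕ) : (⇑dOne)^[j] (0 : Az) = 0 := by
  rw [← Module.End.pow_apply, map_zero]

lemma dOne_iter_sh {x : Az} (hx : dOne x = 0) :
    ∀ k i, k ≤ i → (⇑dOne)^[k] (sh x (e1pow i)) = (i.descFactorial k) • sh x (e1pow (i - k)) := by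
  intro k
  induction k with
  | zero => intro i _; simp
  | succ k ih =>
      intro i hk
      have hik : i - k = (i - (k + 1)) + 1 := by omega
      rw [Function.iterate_succ_apply', ih i (by omega), map_nsmul, hik, dOne_sh, hx]
      simp only [map_zero, LinearMap.zero_apply, zero_add]
      rw [dOne_e1pow, map_nsmul, smul_smul, Nat.descFactorial_succ,
        show i - (k + 1) + 1 = i - k from by omega, mul_comm]

noncomputable def RK (K : ℕ) : Az →ₗ[ℤ] Az :=
  ∑ k ∈ Finset.range (K + 1),
    ((-1 : ℤ) ^ k) • ((sh.flip (wordOf (List.replicate k 1))).comp (dOne ^ k))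

lemma RK_apply (K : ℕ) (x : Az) :
    RK K x = ∑ k ∈ Finset.range (K + 1),
      ((-1 : ℤ) ^ k) • sh ((⇑dOne)^[k] x) (wordOf (List.replicate k 1)) := by
  rw [RK, LinearMap.sum_apply]
  refine Finset.sum_congr rfl fun k _ => ?_
  rw [LinearMap.smul_apply, LinearMap.comp_apply, Module.End.pow_apply, LinearMap.flip_apply]

lemma dOne_iter_kill {x : Az} (hx : dOne x = 0) {i k : ℕ} (h : i < k) :
    (⇑dOne)^[k] (sh x (e1pow i)) = 0 := by
  have h1 : (⇑dOne)^[i + 1] (sh x (e1pow i)) = 0 := by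
    rw [Function.iterate_succ_apply', dOne_iter_sh hx i i le_rfl, Nat.sub_self,
      show e1pow 0 = (1 : Az) from rfl, sh_one_right', map_nsmul, hx, smul_zero]
  have h2 : k = (k - (i + 1)) + (i + 1) := by omega
  rw [h2, Function.iterate_add_apply, h1, dOne_iter_zero]

lemma RK_fixed {x : Az} (hx : dOne x = 0) (K : ℕ) : RK K x = x := by
  rw [RK_apply, Finset.sum_eq_single 0]
  · simp [sh_one_right]
  · intro k _ hk0
    obtain ⟨k', rfl⟩ : ∃ k', k = k' + 1 := ⟨k - 1, by omega⟩
    rw [Function.iterate_succ_apply, hx, dOne_iter_zero]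
    simp
  · intro h
    exact absurd (Finset.mem_range.mpr (by omega)) h

lemma RK_kill {x : Az} (hx : dOne x = 0) {i K : ℕ} (hi : 1 ≤ i) (hK : i ≤ K) :
    RK K (sh x (e1pow i)) = 0 := by
  rw [RK_apply]
  rw [← Finset.sum_subset (Finset.range_subset_range.mpr (show i + 1 ≤ K + 1 by omega))
      (fun k _ hk => by
        rw [dOne_iter_kill hx (show i < k by
          simp only [Finset.mem_range, not_lt] at hk; omega)]
        simp)]
  have hY : ∀ k ∈ Finset.range (i + 1),
      ((-1 : ℤ) ^ k) • sh ((⇑dOne)^[k] (sh x (e1pow i))) (wordOf (List.replicate k 1)) =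
        ((-1 : ℤ) ^ k * ((i.factorial * i.choose k : ℕ) : ℤ)) •
          sh x (wordOf (List.replicate i 1)) := by
    intro k hk
    have hk' : k ≤ i := by simp only [Finset.mem_range] at hk; omega
    rw [dOne_iter_sh hx k i hk']
    simp only [map_nsmul, LinearMap.smul_apply]
    rw [sh_assoc, e1pow_eq (i - k)]
    simp only [map_nsmul, LinearMap.smul_apply]
    rw [sh_word, shuffleWord_replicate, show i - k + k = i from by omega]
    simp only [map_nsmul]
    rw [smul_smul, smul_smul]
    rw [show i.descFactorial k * (i - k).factorial * (i.choose k) = i.factorial * i.choose k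
      from by
        rw [mul_comm (i.descFactorial k) ((i - k).factorial),
          Nat.factorial_mul_descFactorial hk']]
    rw [← Nat.cast_smul_eq_nsmul ℤ, smul_smul]
  rw [Finset.sum_congr rfl hY, ← Finset.sum_smul]
  have hz : (∑ k ∈ Finset.range (i + 1), (-1 : ℤ) ^ k * ((i.factorial * i.choose k : ℕ) : ℤ)) = 0 := by
    have halt := Int.alternating_sum_range_choose (n := i)
    rw [if_neg (by omega)] at halt
    calc ∑ k ∈ Finset.range (i + 1), (-1 : ℤ) ^ k * ((i.factorial * i.choose k : ℕ) : ℤ)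
        = (i.factorial : ℤ) * ∑ k ∈ Finset.range (i + 1), (-1 : ℤ) ^ k * (i.choose k : ℤ) := by
          rw [Finset.mul_sum]
          refine Finset.sum_congr rfl fun k _ => ?_
          push_cast
          ring
      _ = 0 := by rw [halt, mul_zero]
  rw [hz, zero_smul]

end Stmt17RK
section Stmt17GF

open Finset

/-- `ext` with a general starting state `p`. -/
def extP (p : Letter) (l : List Letter) (j : ℕ) : Letter := (p :: l ++ [1]).getD j 1

/-- `∂`-type operator on words, with starting state `p`. -/
noncomputable def GFword (T : Finset Letter) (p : Letter) (l : List Letter) : Az :=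
  ∑ i ∈ Finset.range l.length,
    (((if ({extP p l (i + 1), extP p l (i + 2)} : Finset Letter) = T then 1 else 0)
      - (if ({extP p l i, extP p l (i + 1)} : Finset Letter) = T then 1 else 0) : ℤ))
      • wordOf (l.eraseIdx i)

noncomputable def GF (T : Finset Letter) (p : Letter) : Az →ₗ[ℤ] Az :=
  (Finsupp.lsum ℤ fun w => LinearMap.toSpanSingleton ℤ Az (GFword T p (FreeMonoid.toList w))) ∘ₗ (MonoidAlgebra.coeffLinearEquiv ℤ).toLinearMap

lemma GF_word (T : Finset Letter) (p : Letter) (l : List Letter) :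
    GF T p (wordOf l) = GFword T p l := by
  rw [GF, wordOf]
  rw [lsum_coeff_single]
  rw [FreeMonoid.toList_ofList]

lemma Dword_eq_GFword (α β : Letter) (l : List Letter) : Dword α β l = GFword {α, β} 0 l := rfl

lemma del_eq_GF (α β : Letter) (x : Az) : del α β x = GF {α, β} 0 x := by
  induction x using az_induction with
  | h0 => simp
  | hadd x y hx hy => simp [hx, hy]
  | hsmul c x hx => simp only [map_smul, hx]
  | hword l => rw [del_word, GF_word, Dword_eq_GFword]

lemma GFword_nil (T : Finset Letter) (p : Letter) : GFword T p [] = 0 := by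
  rw [GFword]
  simp

lemma extP_one (a : Letter) (l : List Letter) : extP a l 1 = l.headD 1 := by
  cases l <;> rfl

lemma GFword_cons (T : Finset Letter) (p a : Letter) (l : List Letter) :
    GFword T p (a :: l) =
      (((if ({a, l.headD 1} : Finset Letter) = T then 1 else 0)
        - (if ({p, a} : Finset Letter) = T then 1 else 0) : ℤ)) • wordOf l
      + la a (GFword T a l) := by
  rw [GFword, List.length_cons, Finset.sum_range_succ', add_comm]
  congr 1
  · rw [show extP p (a :: l) 2 = l.headD 1 from extP_one a l]
    rfl
  · rw [GFword, map_sum]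
    refine Finset.sum_congr rfl fun i _ => ?_
    rw [map_smul, la_word]
    rfl

/-- The "head-indicator" linear map. -/
noncomputable def Hq (T : Finset Letter) (q : Letter) : Az →ₗ[ℤ] Az :=
  (Finsupp.lsum ℤ fun w => LinearMap.toSpanSingleton ℤ Az
    ((if ({q, (FreeMonoid.toList w).headD 1} : Finset Letter) = T then (1 : ℤ) else 0)
      • wordOf (FreeMonoid.toList w))) ∘ₗ (MonoidAlgebra.coeffLinearEquiv ℤ).toLinearMap

lemma Hq_word (T : Finset Letter) (q : Letter) (l : List Letter) :
    Hq T q (wordOf l) =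
      (if ({q, l.headD 1} : Finset Letter) = T then (1 : ℤ) else 0) • wordOf l := by
  rw [Hq, wordOf]
  rw [lsum_coeff_single]
  rw [FreeMonoid.toList_ofList]
  rfl

lemma Hq_la (T : Finset Letter) (q a : Letter) (x : Az) :
    Hq T q (la a x) = (if ({q, a} : Finset Letter) = T then (1 : ℤ) else 0) • la a x := by
  induction x using az_induction with
  | h0 => simp
  | hadd x y hx hy => simp only [map_add, hx, hy, smul_add]
  | hsmul c x hx => simp only [map_smul, hx, smul_comm c]
  | hword l =>
      rw [la_word, Hq_word]
      rw [List.headD_cons]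

lemma GF_la (T : Finset Letter) (p a : Letter) (x : Az) :
    GF T p (la a x) = Hq T a x - (if ({p, a} : Finset Letter) = T then (1 : ℤ) else 0) • x
      + la a (GF T a x) := by
  induction x using az_induction with
  | h0 => simp
  | hadd x y hx hy =>
      simp only [map_add, hx, hy, smul_add]
      abel
  | hsmul c x hx =>
      simp only [map_smul, hx, smul_sub, smul_add, smul_comm c]
  | hword l =>
      rw [la_word, GF_word, GFword_cons, Hq_word, GF_word, sub_smul]

lemma K7 (T : Finset Letter) (a b : Letter) (u' v' : List Letter) :
    Hq T a (sh (wordOf u') (wordOf (b :: v'))) =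
      (if ({a, u'.headD 1} : Finset Letter) = T then (1 : ℤ) else 0)
        • sh (wordOf u') (wordOf (b :: v'))
      + ((if ({a, b} : Finset Letter) = T then (1 : ℤ) else 0)
          - (if ({a, u'.headD 1} : Finset Letter) = T then (1 : ℤ) else 0))
        • la b (sh (wordOf u') (wordOf v')) := by
  cases u' with
  | nil =>
      rw [sh_one_left, sh_one_left, ← la_word b v', Hq_la, sub_smul]
      simp only [List.headD_nil]
      abel
  | cons x u₂ =>
      have e := K1 x b v' (wordOf u₂)
      rw [la_word] at e
      rw [e, map_add, Hq_la, Hq_la]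
      rw [List.headD_cons]
      rw [smul_add, sub_smul]
      abel

lemma K7' (T : Finset Letter) (a b : Letter) (u' v' : List Letter) :
    Hq T b (sh (wordOf (a :: u')) (wordOf v')) =
      (if ({b, v'.headD 1} : Finset Letter) = T then (1 : ℤ) else 0)
        • sh (wordOf (a :: u')) (wordOf v')
      + ((if ({b, a} : Finset Letter) = T then (1 : ℤ) else 0)
          - (if ({b, v'.headD 1} : Finset Letter) = T then (1 : ℤ) else 0))
        • la a (sh (wordOf u') (wordOf v')) := by
  cases v' with
  | nil =>
      rw [sh_one_right, sh_one_right, ← la_word a u', Hq_la, sub_smul]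
      simp only [List.headD_nil]
      abel
  | cons y v₂ =>
      have e := K1 a y v₂ (wordOf u')
      rw [la_word] at e
      rw [e, map_add, Hq_la, Hq_la]
      simp only [List.headD_cons]
      rw [smul_add, sub_smul]
      abel

end Stmt17GF
section Stmt17GFDer

open Finset

lemma GF_sh_word (T : Finset Letter) : ∀ n (u v : List Letter) (p : Letter),
    u.length + v.length ≤ n →
    GF T p (sh (wordOf u) (wordOf v)) =
      sh (GF T p (wordOf u)) (wordOf v) + sh (wordOf u) (GF T p (wordOf v)) := by
  intro n
  induction n with
  | zero =>
      intro u v p h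
      have hu : u = [] := by cases u <;> simp_all
      have hv : v = [] := by cases v <;> simp_all
      subst hu; subst hv
      rw [sh_one_left, GF_word, GFword_nil]
      simp [GF_word, GFword_nil]
  | succ n ih =>
      intro u v p h
      match u, v with
      | [], v =>
          rw [sh_one_left, GF_word T p [], GFword_nil]
          simp [sh_one_left]
      | a :: u', [] =>
          rw [sh_one_right, GF_word T p [], GFword_nil]
          simp [sh_one_right]
      | a :: u', b :: v' =>
          simp only [List.length_cons] at h
          have e1 := K1 a b v' (wordOf u')
          rw [la_word] at e1
          have i1 := ih u' (b :: v') a (by simp only [List.length_cons]; omega)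
          have i2 := ih (a :: u') v' b (by simp only [List.length_cons]; omega)
          have hu : GF T p (wordOf (a :: u')) =
              (((if ({a, u'.headD 1} : Finset Letter) = T then 1 else 0)
                - (if ({p, a} : Finset Letter) = T then 1 else 0) : ℤ)) • wordOf u'
              + la a (GF T a (wordOf u')) := by
            rw [GF_word, GFword_cons, ← GF_word]
          have hub : GF T b (wordOf (a :: u')) =
              (((if ({a, u'.headD 1} : Finset Letter) = T then 1 else 0)
                - (if ({b, a} : Finset Letter) = T then 1 else 0) : ℤ)) • wordOf u'
              + la a (GF T a (wordOf u')) := by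
            rw [GF_word, GFword_cons, ← GF_word]
          have hv : GF T a (wordOf (b :: v')) =
              (((if ({b, v'.headD 1} : Finset Letter) = T then 1 else 0)
                - (if ({a, b} : Finset Letter) = T then 1 else 0) : ℤ)) • wordOf v'
              + la b (GF T b (wordOf v')) := by
            rw [GF_word, GFword_cons, ← GF_word]
          have hvp : GF T p (wordOf (b :: v')) =
              (((if ({b, v'.headD 1} : Finset Letter) = T then 1 else 0)
                - (if ({p, b} : Finset Letter) = T then 1 else 0) : ℤ)) • wordOf v'
              + la b (GF T b (wordOf v')) := by
            rw [GF_word, GFword_cons, ← GF_word]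
          rw [e1, map_add, GF_la, GF_la, K7 T a b u' v', K7' T a b u' v', i1, i2,
            hv, hub, hu, hvp]
          simp only [sub_smul]
          simp only [map_add, LinearMap.add_apply]
          simp only [map_sub, LinearMap.sub_apply]
          simp only [map_smul, LinearMap.smul_apply]
          try simp only [smul_sub, smul_add]
          rw [K1 a b v' (GF T a (wordOf u')), K1' a b u' (GF T b (wordOf v'))]
          try simp only [map_add, LinearMap.add_apply]
          try simp only [map_sub, LinearMap.sub_apply]
          try simp only [map_smul, LinearMap.smul_apply]
          rw [Finset.pair_comm b a]
          abel

end Stmt17GFDer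
section Stmt17Final

open Finset

lemma GF_sh (T : Finset Letter) (p : Letter) (x y : Az) :
    GF T p (sh x y) = sh (GF T p x) y + sh x (GF T p y) := by
  induction x using az_induction with
  | h0 => simp
  | hadd x x' hx hx' => simp only [map_add, LinearMap.add_apply, hx, hx']; abel
  | hsmul c x hx => simp only [map_smul, LinearMap.smul_apply, hx, smul_add]
  | hword lu =>
      induction y using az_induction with
      | h0 => simp
      | hadd y y' hy hy' => simp only [map_add, hy, hy']; abel
      | hsmul c y hy => simp only [map_smul, hy, smul_add]
      | hword lv => exact GF_sh_word T (lu.length + lv.length) lu lv p le_rfl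

lemma del_sh (α β : Letter) (x y : Az) :
    del α β (sh x y) = sh (del α β x) y + sh x (del α β y) := by
  simp only [del_eq_GF]
  exact GF_sh {α, β} 0 x y

/-- Span of words not ending in `e₁`. -/
noncomputable def Nsub : Submodule ℤ Az :=
  Submodule.span ℤ {x | ∃ l : List Letter, l.getLast? ≠ some 1 ∧ x = wordOf l}

lemma Az0_le_Nsub : Az0 ≤ Nsub := by
  rw [Az0]
  refine Submodule.span_le.mpr fun x hx => ?_
  obtain ⟨l, hl, rfl⟩ := hx
  refine Submodule.subset_span ⟨l, ?_, rfl⟩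
  rcases hl with h | h
  · subst h; simp
  · exact h.2

lemma dOne_eq_zero_of_mem {x : Az} (hx : x ∈ Nsub) : dOne x = 0 := by
  induction hx using Submodule.span_induction with
  | mem y hy =>
      obtain ⟨l, hl, rfl⟩ := hy
      rw [dOne_word, dWord, if_neg hl]
  | zero => simp
  | add y z _ _ hy hz => rw [map_add, hy, hz, add_zero]
  | smul c y _ hy => rw [map_smul, hy, smul_zero]

lemma ext_succ (l : List Letter) (j : ℕ) : ext l (j + 1) = (l ++ [1]).getD j 1 := rfl

lemma ext_of_lt {l : List Letter} {j : ℕ} (h : j < l.length) :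
    ext l (j + 1) = l.getD j 1 := by
  rw [ext_succ, List.getD_append _ _ _ _ h]

lemma ext_last (l : List Letter) : ext l (l.length + 1) = 1 := by
  rw [ext_succ, List.getD_eq_getElem?_getD, List.getElem?_concat_length]
  rfl

lemma ext_ne_two (c : Letter) (i : ℕ) (j : ℕ) : ext (List.replicate i 1) j ≠ 2 := by
  unfold _root_.ext
  rw [List.getD_eq_getElem?_getD]
  cases h : ((0 : Letter) :: List.replicate i 1 ++ [1])[j]? with
  | none => decide
  | some x =>
      have hx : x ∈ (0 : Letter) :: List.replicate i 1 ++ [1] := List.mem_of_getElem? h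
      simp only [List.cons_append, List.mem_cons, List.mem_append,
        List.mem_singleton] at hx
      rcases hx with h0 | h1 | h2
      · subst h0; decide
      · rw [List.eq_of_mem_replicate h1]; decide
      · rcases h2 with h2 | h2
        · subst h2; decide
        · simp at h2

lemma pair_ne_target {c x y : Letter} (hx : x ≠ 2) (hy : y ≠ 2) :
    ({x, y} : Finset Letter) ≠ {2, c} := by
  intro h
  have h2 : (2 : Letter) ∈ ({x, y} : Finset Letter) := by
    rw [h]; exact Finset.mem_insert_self _ _
  simp only [Finset.mem_insert, Finset.mem_singleton] at h2
  rcases h2 with h2 | h2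
  · exact hx h2.symm
  · exact hy h2.symm

lemma del_e1pow (c : Letter) (i : ℕ) : del 2 c (e1pow i) = 0 := by
  rw [e1pow_eq, map_nsmul, del_word]
  rw [show Dword 2 c (List.replicate i 1) = 0 from ?_, smul_zero]
  rw [Dword]
  refine Finset.sum_eq_zero fun j _ => ?_
  rw [if_neg (pair_ne_target (ext_ne_two c i _) (ext_ne_two c i _)),
    if_neg (pair_ne_target (ext_ne_two c i _) (ext_ne_two c i _)), sub_self, zero_smul]

lemma Dword_mem_Nsub {l : List Letter} (hl : l.getLast? ≠ some 1) (α β : Letter) :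
    Dword α β l ∈ Nsub := by
  rw [Dword]
  refine Submodule.sum_mem _ fun i hi => ?_
  rw [Finset.mem_range] at hi
  by_cases hbad : (l.eraseIdx i).getLast? = some 1
  · -- this can only happen when erasing the final letter with a `1` before it;
    -- then the coefficient vanishes.
    have hlen : (l.eraseIdx i).length = l.length - 1 := List.length_eraseIdx_of_lt hi
    have hne : l.eraseIdx i ≠ [] := by
      intro hnil
      rw [hnil] at hbad
      simp at hbad
    have hlen2 : 2 ≤ l.length := by
      rcases Nat.lt_or_ge l.length 2 with h | h
      · exfalso
        apply hne
        have : (l.eraseIdx i).length = 0 := by omega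
        exact List.length_eq_zero_iff.mp this
      · exact h
    have hgl : (l.eraseIdx i).getLast? = (l.eraseIdx i)[(l.eraseIdx i).length - 1]? :=
      List.getLast?_eq_getElem?
    have hi' : i = l.length - 1 := by
      by_contra hne2
      -- i < l.length - 1 : last letter unchanged
      have hlt : ¬ (l.length - 1 - 1 < i) := by omega
      rw [hgl, hlen, List.getElem?_eraseIdx, if_neg hlt,
        show l.length - 1 - 1 + 1 = l.length - 1 from by omega] at hbad
      rw [List.getLast?_eq_getElem?] at hl
      exact hl hbad
    have h1 : l[l.length - 2]? = some 1 := by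
      rw [hgl, hlen, List.getElem?_eraseIdx, if_pos (by omega)] at hbad
      rw [show l.length - 1 - 1 = l.length - 2 from by omega] at hbad
      exact hbad
    -- coefficient vanishes
    have hc1 : ext l (i + 2) = 1 := by
      rw [show i + 2 = l.length + 1 from by omega]
      exact ext_last l
    have hc2 : ext l i = 1 := by
      rw [show i = (l.length - 2) + 1 from by omega, ext_of_lt (by omega),
        List.getD_eq_getElem?_getD, h1]
      rfl
    rw [hc1, hc2, Finset.pair_comm (ext l (i + 1)) 1, sub_self, zero_smul]
    exact Submodule.zero_mem _
  · exact Submodule.smul_mem _ _ (Submodule.subset_span ⟨_, hbad, rfl⟩)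

lemma del_mem_Nsub {x : Az} (hx : x ∈ Nsub) (α β : Letter) : del α β x ∈ Nsub := by
  induction hx using Submodule.span_induction with
  | mem y hy =>
      obtain ⟨l, hl, rfl⟩ := hy
      rw [del_word]
      exact Dword_mem_Nsub hl α β
  | zero => simp
  | add y z _ _ hy hz => rw [map_add]; exact Submodule.add_mem _ hy hz
  | smul c y _ hy => rw [map_smul]; exact Submodule.smul_mem _ _ hy

end Stmt17Final
/-- For `c ∈ {0,1}`, the shuffle regularization commutes with `∂_{z,c}`:
if `w = Σ_i f_i ⧢ e₁^{⧢ i}` and `∂_{z,c} w = Σ_i g_i ⧢ e₁^{⧢ i}` are the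
regularized decompositions, then `g₀ = ∂_{z,c} f₀`. -/
theorem stmt_17 (c : Letter) (hc : c = 0 ∨ c = 1) (w : Az) (hw : w ∈ Az1)
    (f g : ℕ →₀ Az)
    (hf0 : ∀ i, f i ∈ Az0) (hf : w = f.sum fun i wi => sh wi (e1pow i))
    (hg0 : ∀ i, g i ∈ Az0)
    (hg : del 2 c w = g.sum fun i wi => sh wi (e1pow i)) :
    g 0 = del 2 c (f 0) := by
  classical
  have hNf : ∀ i, f i ∈ Nsub := fun i => Az0_le_Nsub (hf0 i)
  have hNg : ∀ i, g i ∈ Nsub := fun i => Az0_le_Nsub (hg0 i)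
  set K := (f.support ∪ g.support).sup id with hKdef
  have hKf : ∀ i ∈ f.support, i ≤ K :=
    fun i hi => Finset.le_sup (f := id) (Finset.mem_union_left _ hi)
  have hKg : ∀ i ∈ g.support, i ≤ K :=
    fun i hi => Finset.le_sup (f := id) (Finset.mem_union_right _ hi)
  have hdelw : del 2 c w = f.sum fun i wi => sh (del 2 c wi) (e1pow i) := by
    rw [hf, map_finsuppSum]
    refine Finsupp.sum_congr fun i _ => ?_
    rw [del_sh, del_e1pow c i]
    simp
  have hRg : RK K (del 2 c w) = g 0 := by
    rw [hg, map_finsuppSum, Finsupp.sum]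
    by_cases h0 : 0 ∈ g.support
    · rw [Finset.sum_eq_single_of_mem 0 h0
        (fun i hi hne => RK_kill (dOne_eq_zero_of_mem (hNg i)) (by omega) (hKg i hi))]
      rw [show e1pow 0 = (1 : Az) from rfl, sh_one_right']
      exact RK_fixed (dOne_eq_zero_of_mem (hNg 0)) K
    · rw [Finset.sum_eq_zero
        (fun i hi => RK_kill (dOne_eq_zero_of_mem (hNg i))
          (by
            have : i ≠ 0 := fun h => h0 (h ▸ hi)
            omega)
          (hKg i hi)),
        Finsupp.notMem_support_iff.mp h0]
  have hRf : RK K (del 2 c w) = del 2 c (f 0) := by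
    rw [hdelw, map_finsuppSum, Finsupp.sum]
    by_cases h0 : 0 ∈ f.support
    · rw [Finset.sum_eq_single_of_mem 0 h0
        (fun i hi hne => RK_kill (dOne_eq_zero_of_mem (del_mem_Nsub (hNf i) 2 c))
          (by omega) (hKf i hi))]
      rw [show e1pow 0 = (1 : Az) from rfl, sh_one_right']
      exact RK_fixed (dOne_eq_zero_of_mem (del_mem_Nsub (hNf 0) 2 c)) K
    · rw [Finset.sum_eq_zero
        (fun i hi => RK_kill (dOne_eq_zero_of_mem (del_mem_Nsub (hNf i) 2 c))
          (by
            have : i ≠ 0 := fun h => h0 (h ▸ hi)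
            omega)
          (hKf i hi)),
        Finsupp.notMem_support_iff.mp h0, map_zero]
  rw [← hRg, hRf]
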